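/- Let (A,·) be a finite-dimensional (nonunital) associative algebra over a field F and let r ∈ A⊗A be antisymmetric and nondegenerate, i.e. the induced linear map r : A* → A, ⟨u*, r(v*)⟩ = ⟨u*⊗v*, r⟩, is bijective. Then r satisfies the associative Yang–Baxter equation r₁₂r₁₃ + r₁₃r₂₃ − r₂₃r₁₂ = 0 if and only if the bilinear form ω on A defined by ω(x,y) = ⟨r⁻¹(x), y⟩ is a Connes cocycle, i.e. ω is antisymmetric and ω(x·y, z) + ω(y·z, x) + ω(z·x, y) = 0 for all x,y,z ∈ A. -/

import Mathlib

open TensorProduct LinearMap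

section Prelude
variable {F : Type*} [Field F]

/-- Associativity of a (nonunital) bilinear product. -/
def IsAssocMul {A : Type*} [AddCommGroup A] [Module F A]
    (m : A →ₗ[F] A →ₗ[F] A) : Prop :=
  ∀ x y z, m (m x y) z = m x (m y z)

/-- `(l, r, V)` is a bimodule of the associative algebra `(A, m)`. -/
def IsBimodule {A V : Type*} [AddCommGroup A] [Module F A]
    [AddCommGroup V] [Module F V]
    (m : A →ₗ[F] A →ₗ[F] A) (l r : A →ₗ[F] V →ₗ[F] V) : Prop :=
  (∀ x y v, l (m x y) v = l x (l y v)) ∧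
  (∀ x y v, r (m x y) v = r y (r x v)) ∧
  (∀ x y v, l x (r y v) = r y (l x v))

/-- `(A, B, lA, rA, lB, rB)` is a matched pair of associative algebras. -/
def IsMatchedPair {A B : Type*} [AddCommGroup A] [Module F A]
    [AddCommGroup B] [Module F B]
    (mA : A →ₗ[F] A →ₗ[F] A) (mB : B →ₗ[F] B →ₗ[F] B)
    (lA rA : A →ₗ[F] B →ₗ[F] B) (lB rB : B →ₗ[F] A →ₗ[F] A) : Prop :=
  IsAssocMul mA ∧ IsAssocMul mB ∧ IsBimodule mA lA rA ∧ IsBimodule mB lB rB ∧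
  (∀ x a b, lA x (mB a b) = lA (rB a x) b + mB (lA x a) b) ∧
  (∀ x a b, rA x (mB a b) = rA (lB b x) a + mB a (rA x b)) ∧
  (∀ a x y, lB a (mA x y) = lB (rA x a) y + mA (lB a x) y) ∧
  (∀ a x y, rB a (mA x y) = rB (lA y a) x + mA x (rB a y)) ∧
  (∀ x a b, lA (lB a x) b + mB (rA x a) b - rA (rB b x) a - mB a (lA x b) = 0) ∧
  (∀ a x y, lB (lA x a) y + mA (rB a x) y - rB (rA y a) x - mA x (lB a y) = 0)

/-- Dendriform algebra axioms for a pair of bilinear products `≻ = s`, `≺ = p`. -/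
def IsDendriform {A : Type*} [AddCommGroup A] [Module F A]
    (s p : A →ₗ[F] A →ₗ[F] A) : Prop :=
  (∀ x y z, p (p x y) z = p x (s y z + p y z)) ∧
  (∀ x y z, p (s x y) z = s x (p y z)) ∧
  (∀ x y z, s x (s y z) = s (s x y + p x y) z)

/-- The pairing of `f ⊗ g ∈ A* ⊗ A*` with elements of `A ⊗ A`. -/
noncomputable def pair2 {A : Type*} [AddCommGroup A] [Module F A]
    (f g : Module.Dual F A) : (A ⊗[F] A) →ₗ[F] F :=
  (TensorProduct.lid F F).toLinearMap ∘ₗ TensorProduct.map f g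

/-- `t12 m (r ⊗ s)` is `r₁₂ ∙ s₁₃`: on `(x ⊗ y) ⊗ (x' ⊗ y')` it gives `m x x' ⊗ y ⊗ y'`. -/
noncomputable def t12 {A : Type*} [AddCommGroup A] [Module F A]
    (m : A →ₗ[F] A →ₗ[F] A) :
    ((A ⊗[F] A) ⊗[F] (A ⊗[F] A)) →ₗ[F] A ⊗[F] (A ⊗[F] A) :=
  TensorProduct.map (TensorProduct.lift m) LinearMap.id ∘ₗ
    (TensorProduct.tensorTensorTensorComm F A A A A).toLinearMap

/-- `t13 m (r ⊗ s)` is `r₁₃ ∙ s₂₃`: on `(x ⊗ y) ⊗ (x' ⊗ y')` it gives `x ⊗ x' ⊗ m y y'`. -/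
noncomputable def t13 {A : Type*} [AddCommGroup A] [Module F A]
    (m : A →ₗ[F] A →ₗ[F] A) :
    ((A ⊗[F] A) ⊗[F] (A ⊗[F] A)) →ₗ[F] A ⊗[F] (A ⊗[F] A) :=
  (TensorProduct.assoc F A A A).toLinearMap ∘ₗ
    TensorProduct.map LinearMap.id (TensorProduct.lift m) ∘ₗ
    (TensorProduct.tensorTensorTensorComm F A A A A).toLinearMap

/-- `t23 m (r ⊗ s)` is `r₂₃ ∙ s₁₂`: on `(x ⊗ y) ⊗ (x' ⊗ y')` it gives `x' ⊗ m x y' ⊗ y`. -/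
noncomputable def t23 {A : Type*} [AddCommGroup A] [Module F A]
    (m : A →ₗ[F] A →ₗ[F] A) :
    ((A ⊗[F] A) ⊗[F] (A ⊗[F] A)) →ₗ[F] A ⊗[F] (A ⊗[F] A) :=
  (TensorProduct.leftComm F A A A).toLinearMap ∘ₗ
    TensorProduct.map LinearMap.id (TensorProduct.comm F A A).toLinearMap ∘ₗ
    TensorProduct.map (TensorProduct.lift m) LinearMap.id ∘ₗ
    (TensorProduct.tensorTensorTensorComm F A A A A).toLinearMap ∘ₗ
    TensorProduct.map LinearMap.id (TensorProduct.comm F A A).toLinearMap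

/-- `aybE m r = r₁₂r₁₃ + r₁₃r₂₃ − r₂₃r₁₂`, the associative Yang–Baxter expression. -/
noncomputable def aybE {A : Type*} [AddCommGroup A] [Module F A]
    (m : A →ₗ[F] A →ₗ[F] A) (r : A ⊗[F] A) : A ⊗[F] (A ⊗[F] A) :=
  t12 m (r ⊗ₜ r) + t13 m (r ⊗ₜ r) - t23 m (r ⊗ₜ r)

end Prelude

section Helpers
variable {F : Type*} [Field F] {A : Type*} [AddCommGroup A] [Module F A]

/-- triple pairing on `A ⊗ (A ⊗ A)`. -/
noncomputable def pair3 (u v w : Module.Dual F A) : (A ⊗[F] (A ⊗[F] A)) →ₗ[F] F :=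
  (TensorProduct.lid F F).toLinearMap ∘ₗ TensorProduct.map u (pair2 v w)

/-- contract second factor. -/
noncomputable def contr (v : Module.Dual F A) : (A ⊗[F] A) →ₗ[F] A :=
  (TensorProduct.rid F A).toLinearMap ∘ₗ TensorProduct.map LinearMap.id v

/-- contract first factor. -/
noncomputable def contl (u : Module.Dual F A) : (A ⊗[F] A) →ₗ[F] A :=
  (TensorProduct.lid F A).toLinearMap ∘ₗ TensorProduct.map u LinearMap.id

@[simp] lemma pair2_tmul (f g : Module.Dual F A) (x y : A) :
    pair2 f g (x ⊗ₜ[F] y) = f x * g y := by simp [pair2]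

@[simp] lemma pair3_tmul (u v w : Module.Dual F A) (x y z : A) :
    pair3 u v w (x ⊗ₜ[F] (y ⊗ₜ[F] z)) = u x * (v y * w z) := by simp [pair3]

@[simp] lemma contr_tmul (v : Module.Dual F A) (x y : A) :
    contr v (x ⊗ₜ[F] y) = v y • x := by simp [contr]

@[simp] lemma contl_tmul (u : Module.Dual F A) (x y : A) :
    contl u (x ⊗ₜ[F] y) = u x • y := by simp [contl]

variable (mA : A →ₗ[F] A →ₗ[F] A)

lemma pair3_t12 (u v w : Module.Dual F A) :
    pair3 u v w ∘ₗ t12 mA =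
    u ∘ₗ TensorProduct.lift mA ∘ₗ TensorProduct.map (contr v) (contr w) := by
  ext x y x' y'
  simp [t12, mul_comm, mul_left_comm, mul_assoc]

lemma pair3_t13 (u v w : Module.Dual F A) :
    pair3 u v w ∘ₗ t13 mA =
    w ∘ₗ TensorProduct.lift mA ∘ₗ TensorProduct.map (contl u) (contl v) := by
  ext x y x' y'
  simp [t13, mul_comm, mul_left_comm, mul_assoc]

lemma pair3_t23 (u v w : Module.Dual F A) :
    pair3 u v w ∘ₗ t23 mA =
    v ∘ₗ TensorProduct.lift mA ∘ₗ TensorProduct.map (contr w) (contl u) := by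
  ext x y x' y'
  simp [t23, mul_comm, mul_left_comm, mul_assoc]

lemma pair2_comm (u v : Module.Dual F A) :
    pair2 u v ∘ₗ (TensorProduct.comm F A A).toLinearMap = pair2 v u := by
  ext x y
  simp [mul_comm]

/-- separation of points by triple pairings. -/
lemma pair3_sep [FiniteDimensional F A] (T : A ⊗[F] (A ⊗[F] A))
    (h : ∀ u v w : Module.Dual F A, pair3 u v w T = 0) : T = 0 := by
  classical
  set b := Module.finBasis F A
  set B := b.tensorProduct (b.tensorProduct b) with hB
  have key : ∀ i j k, (B.coord (i, (j, k)) : A ⊗[F] (A ⊗[F] A) →ₗ[F] F) =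
      pair3 (b.coord i) (b.coord j) (b.coord k) := by
    intro i j k
    ext x y z
    simp [hB, Module.Basis.coord_apply, Module.Basis.tensorProduct_repr_tmul_apply,
      smul_eq_mul, mul_comm, mul_left_comm]
  have : B.repr T = 0 := by
    ext p
    obtain ⟨i, j, k⟩ := p
    have := congrFun (congrArg (fun f => f.toFun) (key i j k)) T
    simpa [Module.Basis.coord_apply, h] using this.trans (h _ _ _)
  simpa using B.repr.injective (by simpa using this)


lemma comp_contr (u v : Module.Dual F A) : u ∘ₗ contr v = pair2 u v := by
  ext x y; simp [mul_comm]

lemma comp_contl (u w : Module.Dual F A) : w ∘ₗ contl u = pair2 u w := by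
  ext x y; simp [mul_comm]

end Helpers

/-- a nondegenerate antisymmetric `r` solves the associative
Yang–Baxter equation iff the bilinear form `ω(x,y) = ⟨r⁻¹(x), y⟩` is a Connes
cocycle. -/
theorem ayb_iff_connes_cocycle
    {F A : Type*} [Field F] [AddCommGroup A] [Module F A] [FiniteDimensional F A]
    (mA : A →ₗ[F] A →ₗ[F] A) (hA : IsAssocMul mA)
    (r : A ⊗[F] A)
    (hskew : (TensorProduct.comm F A A) r = -r)
    -- nondegeneracy: `r` induces a linear isomorphism `A* ≃ A`
    (e : Module.Dual F A ≃ₗ[F] A)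
    (he : ∀ u v : Module.Dual F A, u (e v) = pair2 u v r) :
    aybE mA r = 0 ↔
      ((∀ x y : A, e.symm x y = - e.symm y x) ∧
       (∀ x y z : A,
          e.symm (mA x y) z + e.symm (mA y z) x + e.symm (mA z x) y = 0)) := by
  classical
  have sep : ∀ a b : A, (∀ u : Module.Dual F A, u a = u b) → a = b := by
    intro a b h
    have h0 : ∀ u : Module.Dual F A, u (a - b) = 0 := fun u => by simp [h u]
    have := (Module.forall_dual_apply_eq_zero_iff F (a - b)).mp h0
    exact sub_eq_zero.mp this
  have hanti : ∀ u v : Module.Dual F A, u (e v) = - v (e u) := by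
    intro u v
    have h3 : pair2 v u r = pair2 u v ((TensorProduct.comm F A A) r) := by
      rw [← pair2_comm u v]; rfl
    rw [he u v, he v u, h3, hskew, map_neg, neg_neg]
  have contr_r : ∀ v, contr v r = e v := by
    intro v
    refine sep _ _ (fun u => ?_)
    have h1 : u (contr v r) = pair2 u v r := congrArg (fun f => f r) (comp_contr u v)
    rw [h1, ← he u v]
  have contl_r : ∀ u, contl u r = - e u := by
    intro u
    refine sep _ _ (fun w => ?_)
    have h1 : w (contl u r) = pair2 u w r := congrArg (fun f => f r) (comp_contl u w)
    rw [h1, ← he u w, hanti u w, map_neg]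
  have hayb : ∀ u v w : Module.Dual F A, pair3 u v w (aybE mA r) =
      u (mA (e v) (e w)) + w (mA (e u) (e v)) + v (mA (e w) (e u)) := by
    intro u v w
    have h12 : pair3 u v w (t12 mA (r ⊗ₜ[F] r)) = u (mA (e v) (e w)) := by
      have := congrArg (fun f => f (r ⊗ₜ[F] r)) (pair3_t12 mA u v w)
      simpa [TensorProduct.map_tmul, contr_r] using this
    have h13 : pair3 u v w (t13 mA (r ⊗ₜ[F] r)) = w (mA (e u) (e v)) := by
      have := congrArg (fun f => f (r ⊗ₜ[F] r)) (pair3_t13 mA u v w)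
      simpa [TensorProduct.map_tmul, contl_r] using this
    have h23 : pair3 u v w (t23 mA (r ⊗ₜ[F] r)) = - v (mA (e w) (e u)) := by
      have := congrArg (fun f => f (r ⊗ₜ[F] r)) (pair3_t23 mA u v w)
      simpa [TensorProduct.map_tmul, contr_r, contl_r] using this
    rw [aybE]
    simp only [map_add, map_sub, h12, h13, h23]
    ring
  have omega_anti : ∀ x y : A, e.symm x y = - e.symm y x := by
    intro x y
    have := hanti (e.symm x) (e.symm y)
    simpa using this
  constructor
  · intro h0
    refine ⟨omega_anti, fun x y z => ?_⟩
    have h1 := hayb (e.symm x) (e.symm y) (e.symm z)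
    rw [h0] at h1
    simp only [map_zero, LinearEquiv.apply_symm_apply] at h1
    have a1 := omega_anti (mA x y) z
    have a2 := omega_anti (mA y z) x
    have a3 := omega_anti (mA z x) y
    rw [a1, a2, a3]
    linear_combination h1
  · rintro ⟨hw1, hw2⟩
    apply pair3_sep
    intro u v w
    rw [hayb]
    have h2 := hw2 (e u) (e v) (e w)
    have a1 := hw1 (mA (e u) (e v)) (e w)
    have a2 := hw1 (mA (e v) (e w)) (e u)
    have a3 := hw1 (mA (e w) (e u)) (e v)
    have b1 : u (mA (e v) (e w)) = e.symm (e u) (mA (e v) (e w)) := by simp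
    have b2 : w (mA (e u) (e v)) = e.symm (e w) (mA (e u) (e v)) := by simp
    have b3 : v (mA (e w) (e u)) = e.symm (e v) (mA (e w) (e u)) := by simp
    rw [b1, b2, b3]
    have c1 := omega_anti (e u) (mA (e v) (e w))
    have c2 := omega_anti (e w) (mA (e u) (e v))
    have c3 := omega_anti (e v) (mA (e w) (e u))
    linear_combination c1 + c2 + c3 - h2
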